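/- Let U† be a K×K real orthogonal matrix ((U†)ᵀ·U† = I_K) and set U := Ω · Z · W⁻¹ · U†. Then for every i ∈ Fin N, the Euclidean norm of the i-th row of U equals ω i / sqrt(Σ_{j ∈ C_{s i}} (ω j)²); in particular every row of U is nonzero. Moreover, the row-normalized matrix Ū, whose i-th row is U_{i,:} / ‖U_{i,:}‖, satisfies Ū_{i,:} = (U†)_{s i,:} for every i — so Ū takes at most K distinct row values and its rows are constant within each cluster — and for all i, j ∈ Fin N with s i ≠ s j, one has ‖Ū_{i,:} − Ū_{j,:}‖ = √2. -/
import Mathlib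


open Matrix Finset

noncomputable section

/-- The k-th cluster: indices assigned to latent class k. -/
def clusterSet {N K : ℕ} (s : Fin N → Fin K) (k : Fin K) : Finset (Fin N) :=
  Finset.univ.filter (fun i => s i = k)

/-- The N×K cluster-indicator matrix Z. -/
def clusterInd {N K : ℕ} (s : Fin N → Fin K) : Matrix (Fin N) (Fin K) ℝ :=
  fun i k => if s i = k then 1 else 0

/-- The N×N diagonal matrix Ω of degree parameters. -/
def degMat {N : ℕ} (ω : Fin N → ℝ) : Matrix (Fin N) (Fin N) ℝ :=
  Matrix.diagonal ω

/-- The K×K diagonal matrix W with k-th entry sqrt(∑_{i ∈ C_k} ω i ^ 2). -/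
def Wmat {N K : ℕ} (s : Fin N → Fin K) (ω : Fin N → ℝ) : Matrix (Fin K) (Fin K) ℝ :=
  Matrix.diagonal (fun k => Real.sqrt (∑ i ∈ clusterSet s k, ω i ^ 2))

/-- Euclidean ℓ² norm of a vector indexed by `Fin n`. -/
def euclNorm {n : ℕ} (v : Fin n → ℝ) : ℝ :=
  ‖(EuclideanSpace.equiv (Fin n) ℝ).symm v‖

theorem stmt1 (N K : ℕ) (hN : 0 < N) (hK : 0 < K)
    (s : Fin N → Fin K) (hs : ∀ k, (clusterSet s k).Nonempty)
    (ω : Fin N → ℝ) (hω : ∀ i, 0 < ω i)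
    (Ud : Matrix (Fin K) (Fin K) ℝ) (hUd : Udᵀ * Ud = 1)
    (U : Matrix (Fin N) (Fin K) ℝ)
    (hU : U = degMat ω * clusterInd s * (Wmat s ω)⁻¹ * Ud)
    (Ubar : Matrix (Fin N) (Fin K) ℝ)
    (hUbar : ∀ i, Ubar i = (euclNorm (U i))⁻¹ • U i) :
    (∀ i, euclNorm (U i) = ω i / Real.sqrt (∑ j ∈ clusterSet s (s i), ω j ^ 2)) ∧
    (∀ i, U i ≠ 0) ∧
    (∀ i, Ubar i = Ud (s i)) ∧
    (∀ i j, s i ≠ s j → euclNorm (Ubar i - Ubar j) = Real.sqrt 2) := by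
  have henorm : ∀ (v : Fin K → ℝ), euclNorm v = Real.sqrt (∑ k, v k ^ 2) := by
    intro v
    rw [euclNorm, EuclideanSpace.norm_eq]
    congr 1
    exact Finset.sum_congr rfl fun k _ => by
      simp [EuclideanSpace.equiv, Real.norm_eq_abs, sq_abs]
  set w : Fin K → ℝ := fun k => Real.sqrt (∑ i ∈ clusterSet s k, ω i ^ 2) with hw
  have hwpos : ∀ k, 0 < w k := by
    intro k
    apply Real.sqrt_pos.mpr
    exact Finset.sum_pos (fun i _ => pow_pos (hω i) 2) (hs k)
  -- rows of Ud are orthonormal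
  have hUd' : Ud * Udᵀ = 1 := mul_eq_one_comm.mp hUd
  have hrow : ∀ a b, ∑ k, Ud a k * Ud b k = if a = b then (1:ℝ) else 0 := by
    intro a b
    have := congrFun (congrFun hUd' a) b
    simpa [Matrix.mul_apply, Matrix.transpose_apply, Matrix.one_apply] using this
  -- inverse of W
  have hWinv : (Wmat s ω)⁻¹ = Matrix.diagonal (fun k => (w k)⁻¹) := by
    apply Matrix.inv_eq_right_inv
    show Matrix.diagonal w * Matrix.diagonal (fun k => (w k)⁻¹) = 1
    rw [Matrix.diagonal_mul_diagonal]
    have h1 : (fun k => w k * (w k)⁻¹) = fun _ => (1:ℝ) :=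
      funext fun k => mul_inv_cancel₀ (hwpos k).ne'
    rw [h1, Matrix.diagonal_one]
  -- entrywise form of U
  have hUe : ∀ i, U i = (ω i / w (s i)) • Ud (s i) := by
    intro i
    funext k
    rw [hU, hWinv]
    simp only [Matrix.mul_apply, degMat, clusterInd, Matrix.diagonal_apply]
    simp only [ite_mul, mul_ite, zero_mul, mul_zero, mul_one, one_mul,
      Finset.sum_ite_eq, Finset.sum_ite_eq', Finset.mem_univ, if_true]
    have h3 : ∀ x : Fin K,
        (∑ x_1 : Fin N, if s x_1 = x then if i = x_1 then ω i else 0 else 0)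
          = if s i = x then ω i else 0 := by
      intro x
      rw [Finset.sum_eq_single i]
      · simp
      · intro b _ hb; simp [Ne.symm hb]
      · simp
    simp only [h3, ite_mul, zero_mul, Finset.sum_ite_eq, Finset.mem_univ, if_true]
    simp [div_eq_mul_inv, Pi.smul_apply, smul_eq_mul]
  have hnorm : ∀ i, euclNorm (U i) = ω i / w (s i) := by
    intro i
    rw [hUe i, henorm]
    have h2 : ∑ k, ((ω i / w (s i)) • Ud (s i)) k ^ 2
        = (ω i / w (s i))^2 * ∑ k, Ud (s i) k * Ud (s i) k := by
      rw [Finset.mul_sum]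
      exact Finset.sum_congr rfl fun k _ => by
        simp only [Pi.smul_apply, smul_eq_mul]; ring
    rw [h2, hrow, if_pos rfl, mul_one, Real.sqrt_sq
      (div_pos (hω i) (hwpos (s i))).le]
  have hUne : ∀ i, U i ≠ 0 := by
    intro i h
    have h0 : euclNorm (U i) = 0 := by rw [h]; simp [henorm]
    rw [hnorm i] at h0
    exact absurd h0 (div_pos (hω i) (hwpos (s i))).ne'
  have hUbar' : ∀ i, Ubar i = Ud (s i) := by
    intro i
    rw [hUbar i, hnorm i, hUe i, smul_smul,
      inv_mul_cancel₀ (div_pos (hω i) (hwpos (s i))).ne', one_smul]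
  refine ⟨hnorm, hUne, hUbar', ?_⟩
  intro i j hij
  rw [hUbar' i, hUbar' j, henorm]
  have hsum : ∑ k, (Ud (s i) - Ud (s j)) k ^ 2 = 2 := by
    have e : ∀ k, (Ud (s i) - Ud (s j)) k ^ 2
        = Ud (s i) k * Ud (s i) k - 2 * (Ud (s i) k * Ud (s j) k)
          + Ud (s j) k * Ud (s j) k := fun k => by
      simp only [Pi.sub_apply]; ring
    rw [Finset.sum_congr rfl (fun k _ => e k), Finset.sum_add_distrib,
      Finset.sum_sub_distrib, ← Finset.mul_sum, hrow, hrow, hrow,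
      if_pos rfl, if_pos rfl, if_neg hij]
    ring
  rw [hsum]
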